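/- For every complex number z with 0 < Re(z) < 1 and 2^(1-z) ≠ 1, the analytic continuation of the Riemann zeta function satisfies ζ(z) = (1 - 2^(1-z))⁻¹ · ∑_{n=1}^∞ (-1)^(n-1) n^(-z), where the alternating series converges. -/

import Mathlib

open Complex Filter

noncomputable def etaTerm (z : ℂ) (k : ℕ) : ℂ :=
  ((2*k+1 : ℝ) : ℂ) ^ (-z) - ((2*k+2 : ℝ) : ℂ) ^ (-z)

noncomputable def etaF (z : ℂ) : ℂ := ∑' k, etaTerm z k

-- L1: MVT bound
lemma L1 {a : ℝ} (ha : 1 ≤ a) {z : ℂ} (hz : 0 < z.re) :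
    ‖((a+1 : ℝ) : ℂ) ^ (-z) - ((a : ℝ) : ℂ) ^ (-z)‖ ≤ ‖z‖ * a ^ (-z.re - 1) := by
  have ha0 : (0:ℝ) < a := lt_of_lt_of_le one_pos ha
  have key := norm_image_sub_le_of_norm_deriv_le_segment'
    (f := fun t : ℝ => ((t : ℝ) : ℂ) ^ (-z)) (a := a) (b := a + 1)
    (f' := fun t : ℝ => -z * ((t:ℝ):ℂ) ^ (-z - 1))
    (C := ‖z‖ * a ^ (-z.re - 1)) ?_ ?_ (a+1) (by constructor <;> linarith)
  · simpa using key
  · intro t ht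
    have ht0 : (0:ℝ) < t := lt_of_lt_of_le ha0 ht.1
    have h0 : ((t:ℝ):ℂ) ∈ slitPlane := Or.inl (by simpa using ht0)
    have hd : HasDerivAt (fun y : ℂ => y ^ (-z)) (-z * ((t:ℝ):ℂ) ^ (-z - 1) * 1) ((t:ℝ):ℂ) :=
      (hasDerivAt_id _).cpow_const h0
    have := hd.comp_ofReal
    simpa using this.hasDerivWithinAt
  · intro t ht
    have ht0 : (0:ℝ) < t := lt_of_lt_of_le ha0 ht.1
    rw [norm_mul, norm_neg,
      Complex.norm_cpow_eq_rpow_re_of_pos ht0]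
    gcongr
    have : (-z - 1).re ≤ 0 := by simp; linarith
    calc t ^ (-z - 1).re ≤ a ^ (-z - 1).re :=
          Real.rpow_le_rpow_of_nonpos ha0 ht.1 this
      _ = a ^ (-z.re - 1) := by norm_num [Complex.sub_re, Complex.neg_re]

-- L2: bound on region
lemma L2 (k : ℕ) {z : ℂ} {δ R : ℝ} (hδ : 0 < δ) (hz : δ ≤ z.re) (hR : ‖z‖ ≤ R) :
    ‖etaTerm z k‖ ≤ R * ((2*k+1 : ℝ)) ^ (-(δ+1)) := by
  have hz0 : 0 < z.re := lt_of_lt_of_le hδ hz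
  have hk : (0:ℝ) ≤ (k:ℝ) := k.cast_nonneg
  have ha : (1:ℝ) ≤ 2*k+1 := by linarith
  have h1 := L1 (a := 2*k+1) ha hz0
  rw [etaTerm, ← norm_sub_rev]
  have he : ((2*(k:ℝ)+1) + 1 : ℝ) = (2*k+2 : ℝ) := by ring
  rw [← he]
  refine h1.trans ?_
  have h3 : ((2*(k:ℝ)+1)) ^ (-z.re - 1) ≤ ((2*(k:ℝ)+1)) ^ (-(δ+1)) :=
    Real.rpow_le_rpow_of_exponent_le ha (by linarith)
  have h4 : (0:ℝ) ≤ ((2*(k:ℝ)+1)) ^ (-z.re - 1) := Real.rpow_nonneg (by linarith) _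
  exact mul_le_mul hR h3 h4 ((norm_nonneg z).trans hR)

-- L3: summable bound
lemma L3 {δ : ℝ} (R : ℝ) (hδ : 0 < δ) :
    Summable (fun k : ℕ => R * ((2*k+1 : ℝ)) ^ (-(δ+1))) := by
  apply Summable.mul_left
  have hsum : Summable (fun k : ℕ => ((k+1 : ℝ)) ^ (-(δ+1))) := by
    have h := (Real.summable_nat_rpow (p := -(δ+1))).2 (by linarith)
    exact_mod_cast (summable_nat_add_iff 1).2 h
  refine Summable.of_nonneg_of_le (fun k => by positivity) (fun k => ?_) hsum
  have hk : (0:ℝ) ≤ (k:ℝ) := k.cast_nonneg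
  exact Real.rpow_le_rpow_of_nonpos (by linarith) (by linarith) (by linarith)

-- L4
lemma L4 {z : ℂ} (hz : 0 < z.re) : Summable (etaTerm z) :=
  Summable.of_norm_bounded (L3 ‖z‖ hz) (fun k => L2 k hz le_rfl le_rfl)

-- L5
lemma L5 {z₀ : ℂ} (hz : 0 < z₀.re) : AnalyticAt ℂ etaF z₀ := by
  set δ := z₀.re / 2 with hδdef
  set R := ‖z₀‖ + 1 with hRdef
  have hδ : 0 < δ := by positivity
  set U : Set ℂ := {z | δ < z.re} ∩ {z | ‖z‖ < R} with hUdef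
  have hUo : IsOpen U :=
    (isOpen_lt continuous_const Complex.continuous_re).inter
      (isOpen_lt continuous_norm continuous_const)
  have hdiff : DifferentiableOn ℂ (fun w => ∑' k, etaTerm w k) U := by
    refine differentiableOn_tsum_of_summable_norm (u := fun k => R * ((2*k+1:ℝ)) ^ (-(δ+1)))
      (L3 R hδ) (fun k => ?_) hUo (fun k w hw => L2 k hδ (le_of_lt hw.1) (le_of_lt hw.2))
    have h1 : ((2*(k:ℝ)+1 : ℝ) : ℂ) ≠ 0 := Complex.ofReal_ne_zero.mpr (by positivity)
    have h2 : ((2*(k:ℝ)+2 : ℝ) : ℂ) ≠ 0 := Complex.ofReal_ne_zero.mpr (by positivity)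
    exact ((differentiable_neg.const_cpow (Or.inl h1)).sub
      (differentiable_neg.const_cpow (Or.inl h2))).differentiableOn
  have hmem : z₀ ∈ U := by
    constructor
    · show δ < z₀.re
      rw [hδdef]; linarith
    · show ‖z₀‖ < R
      rw [hRdef]; linarith
  exact (hdiff.analyticOnNhd hUo) z₀ hmem

-- pairing of partial sums
lemma pairSum (z : ℂ) (m : ℕ) :
    ∑ n ∈ Finset.range (2*m), (-1 : ℂ) ^ n / ((n : ℂ) + 1) ^ z
      = ∑ k ∈ Finset.range m, etaTerm z k := by
  induction m with
  | zero => simp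
  | succ m ih =>
    have h2 : 2*(m+1) = (2*m) + 1 + 1 := by ring
    rw [h2, Finset.sum_range_succ, Finset.sum_range_succ, ih, Finset.sum_range_succ]
    have e1 : (-1 : ℂ) ^ (2*m) / (((2*m : ℕ) : ℂ) + 1) ^ z = ((2*m+1 : ℝ) : ℂ) ^ (-z) := by
      rw [pow_mul, Complex.cpow_neg]; push_cast; norm_num
    have e2 : (-1 : ℂ) ^ (2*m+1) / (((2*m+1 : ℕ) : ℂ) + 1) ^ z = -((2*m+2 : ℝ) : ℂ) ^ (-z) := by
      rw [pow_succ, pow_mul, Complex.cpow_neg]; push_cast; norm_num; ring_nf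
    push_cast at e1 e2 ⊢
    rw [e1, e2, etaTerm]
    push_cast
    ring

-- L6
lemma L6 {z : ℂ} (hz : 0 < z.re) :
    Tendsto (fun N : ℕ => ∑ n ∈ Finset.range N, (-1 : ℂ) ^ n / ((n : ℂ) + 1) ^ z)
      atTop (nhds (etaF z)) := by
  have hS : HasSum (etaTerm z) (etaF z) := (L4 hz).hasSum
  have hT : Tendsto (fun m => ∑ k ∈ Finset.range m, etaTerm z k) atTop (nhds (etaF z)) :=
    hS.tendsto_sum_nat
  have hhalf : Tendsto (fun N : ℕ => N / 2) atTop atTop :=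
    Filter.tendsto_atTop_atTop.2 fun b => ⟨2*b, fun n hn => by omega⟩
  have hT' : Tendsto (fun N : ℕ => ∑ k ∈ Finset.range (N/2), etaTerm z k) atTop (nhds (etaF z)) :=
    hT.comp hhalf
  -- remainder
  set S : ℕ → ℂ := fun N => ∑ n ∈ Finset.range N, (-1 : ℂ) ^ n / ((n : ℂ) + 1) ^ z with hSdef
  have hr : Tendsto (fun N : ℕ => S N - ∑ k ∈ Finset.range (N/2), etaTerm z k) atTop (nhds 0) := by
    apply squeeze_zero_norm' (a := fun N : ℕ => (N:ℝ) ^ (-z.re))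
    · filter_upwards [eventually_ge_atTop 0] with N _
      rcases Nat.even_or_odd' N with ⟨m, hm | hm⟩
      · subst hm
        have h5 : (2 * m) / 2 = m := by omega
        simp only [hSdef, h5, pairSum, sub_self, norm_zero]
        positivity
      · subst hm
        have h5 : (2*m + 1) / 2 = m := by omega
        simp only [hSdef, h5, Finset.sum_range_succ, pairSum]
        have e1 : (-1 : ℂ) ^ (2*m) / (((2*m : ℕ) : ℂ) + 1) ^ z = ((2*m+1 : ℝ) : ℂ) ^ (-z) := by
          rw [pow_mul, Complex.cpow_neg]; push_cast; norm_num
        rw [add_sub_cancel_left, e1,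
          Complex.norm_cpow_eq_rpow_re_of_pos (by positivity)]
        have hb : (0:ℝ) < 2*(m:ℝ)+1 := by positivity
        simp only [Complex.neg_re]
        push_cast
        exact le_refl _
    · exact (tendsto_rpow_neg_atTop hz).comp tendsto_natCast_atTop_atTop
  have := hr.add hT'
  rw [zero_add] at this
  refine this.congr fun N => by ring

lemma L7 {z : ℂ} (hz : 1 < z.re) :
    etaF z = (1 - 2 ^ ((1 : ℂ) - z)) * riemannZeta z := by
  set g : ℕ → ℂ := fun n => (((n:ℝ) + 1 : ℝ) : ℂ) ^ (-z) with hg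
  have hgsum : Summable g := by
    apply Summable.of_norm
    have : ∀ n : ℕ, ‖g n‖ = ((n:ℝ)+1) ^ (-z.re) := by
      intro n
      rw [hg, Complex.norm_cpow_eq_rpow_re_of_pos (by positivity)]
      simp
    rw [funext this]
    have h := (Real.summable_nat_rpow (p := -z.re)).2 (by linarith)
    simpa using (summable_nat_add_iff 1).2 h
  have hzeta : ∑' n, g n = riemannZeta z := by
    rw [zeta_eq_tsum_one_div_nat_add_one_cpow hz]
    congr 1; funext n
    show (((n:ℝ) + 1 : ℝ) : ℂ) ^ (-z) = 1 / ((n:ℂ) + 1) ^ z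
    rw [Complex.cpow_neg, one_div]
    push_cast
    ring_nf
  have heven : Summable (fun k => g (2*k)) := hgsum.comp_injective (fun a b => by omega)
  have hodd : Summable (fun k => g (2*k+1)) := hgsum.comp_injective (fun a b => by omega)
  have hsplit : ∑' k, g (2*k) + ∑' k, g (2*k+1) = ∑' n, g n := tsum_even_add_odd heven hodd
  have hoddval : ∑' k, g (2*k+1) = 2 ^ (-z) * riemannZeta z := by
    have : ∀ k : ℕ, g (2*k+1) = 2 ^ (-z) * g k := by
      intro k
      rw [hg]
      have h2 : ((2*(k:ℕ)+1 : ℕ):ℝ) + 1 = (2:ℝ) * ((k:ℝ)+1) := by push_cast; ring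
      show ((((2*k+1 : ℕ):ℝ) + 1 : ℝ) : ℂ) ^ (-z) = 2 ^ (-z) * ((((k:ℝ)+1 : ℝ)) : ℂ) ^ (-z)
      rw [h2, Complex.ofReal_mul, mul_cpow_ofReal_nonneg (by norm_num) (by positivity)]
      norm_num
    rw [funext this, tsum_mul_left, hzeta]
  have hterm : ∀ k : ℕ, etaTerm z k = g (2*k) - g (2*k+1) := by
    intro k
    rw [etaTerm, hg]
    push_cast
    ring_nf
  have : etaF z = ∑' k, g (2*k) - ∑' k, g (2*k+1) := by
    rw [etaF, funext hterm]
    exact Summable.tsum_sub heven hodd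
  rw [this]
  have h2z : (2:ℂ) ^ ((1:ℂ) - z) = 2 * 2 ^ (-z) := by
    rw [sub_eq_add_neg, Complex.cpow_add _ _ two_ne_zero, Complex.cpow_one]
  have hev : ∑' k, g (2*k) = riemannZeta z - 2 ^ (-z) * riemannZeta z :=
    eq_sub_of_add_eq (by rw [← hoddval, hsplit, hzeta])
  rw [hev, hoddval, h2z]
  ring


lemma L8 {z : ℂ} (h0 : 0 < z.re) (h1 : z.re < 1) :
    etaF z = (1 - 2 ^ ((1 : ℂ) - z)) * riemannZeta z := by
  set g : ℂ → ℂ := fun w => (1 - 2 ^ ((1 : ℂ) - w)) * riemannZeta w with hgdef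
  have hg_an : AnalyticOnNhd ℂ g {w : ℂ | w ≠ 1} := by
    refine DifferentiableOn.analyticOnNhd (fun w hw => ?_) isOpen_ne
    exact (((((differentiableAt_const (1:ℂ)).sub differentiableAt_id).const_cpow
      (Or.inl two_ne_zero)).const_sub 1).mul (differentiableAt_riemannZeta hw)).differentiableWithinAt
  have hη_an : AnalyticOnNhd ℂ etaF {w : ℂ | 0 < w.re} := fun w hw => L5 hw
  set U3 : Set ℂ := {w | 0 < w.re} ∩ {w | 0 < w.im} with hU3def
  have hU3o : IsOpen U3 :=
    (isOpen_lt continuous_const Complex.continuous_re).inter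
      (isOpen_lt continuous_const Complex.continuous_im)
  have hU3sub1 : U3 ⊆ {w : ℂ | 0 < w.re} := Set.inter_subset_left
  have hU3sub2 : U3 ⊆ {w : ℂ | w ≠ 1} := by
    intro w hw hcontra
    rw [hcontra] at hw
    simpa using hw.2
  have hpre3 : IsPreconnected U3 :=
    ((convex_halfSpace_re_gt 0).inter (convex_halfSpace_im_gt 0)).isPreconnected
  have hz₀mem : (2 + Complex.I) ∈ U3 := by
    constructor <;> simp
  have hev : etaF =ᶠ[nhds (2 + Complex.I)] g := by
    have hopen : IsOpen {w : ℂ | 1 < w.re} := isOpen_lt continuous_const Complex.continuous_re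
    have hmem : (2 + Complex.I) ∈ {w : ℂ | 1 < w.re} := by simp
    filter_upwards [hopen.mem_nhds hmem] with w hw
    exact L7 hw
  have hEq3 : Set.EqOn etaF g U3 :=
    (hη_an.mono hU3sub1).eqOn_of_preconnected_of_eventuallyEq (hg_an.mono hU3sub2)
      hpre3 hz₀mem hev
  set U5 : Set ℂ := {w | 0 < w.re} ∩ {w | w.re < 1} with hU5def
  have hU5sub1 : U5 ⊆ {w : ℂ | 0 < w.re} := Set.inter_subset_left
  have hU5sub2 : U5 ⊆ {w : ℂ | w ≠ 1} := by
    intro w hw hcontra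
    rw [hcontra] at hw
    simpa using hw.2
  have hpre5 : IsPreconnected U5 :=
    ((convex_halfSpace_re_gt 0).inter (convex_halfSpace_re_lt 1)).isPreconnected
  have hz₁mem : ((1/2 : ℝ) + Complex.I : ℂ) ∈ U5 := by
    constructor <;> simp <;> norm_num
  have hev5 : etaF =ᶠ[nhds ((1/2 : ℝ) + Complex.I : ℂ)] g := by
    have hmem : ((1/2 : ℝ) + Complex.I : ℂ) ∈ U3 := by
      constructor <;> simp <;> norm_num
    filter_upwards [hU3o.mem_nhds hmem] with w hw
    exact hEq3 hw
  have hEq5 : Set.EqOn etaF g U5 :=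
    (hη_an.mono hU5sub1).eqOn_of_preconnected_of_eventuallyEq (hg_an.mono hU5sub2)
      hpre5 hz₁mem hev5
  exact hEq5 ⟨h0, h1⟩

theorem zeta_eta_critical_strip (z : ℂ) (hz0 : 0 < z.re) (hz1 : z.re < 1)
    (h2 : (2 : ℂ) ^ ((1 : ℂ) - z) ≠ 1) :
    ∃ S : ℂ,
      Tendsto (fun N : ℕ => ∑ n ∈ Finset.range N, (-1 : ℂ) ^ n / ((n : ℂ) + 1) ^ z)
        atTop (nhds S) ∧
      riemannZeta z = (1 - 2 ^ ((1 : ℂ) - z))⁻¹ * S := by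
  refine ⟨etaF z, L6 hz0, ?_⟩
  have hne : (1 : ℂ) - 2 ^ ((1 : ℂ) - z) ≠ 0 := sub_ne_zero.mpr (Ne.symm h2)
  rw [L8 hz0 hz1, inv_mul_cancel_left₀ hne]
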